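/- Let G : C → D and D : D → C be an adjoint pair of additive functors between additive categories, with D fully faithful, G left adjoint to D, C a Grothendieck abelian category, and G exact. Then D is a Grothendieck abelian category. -/

import Mathlib

open CategoryTheory Limits

/-- A Grothendieck abelian category: an abelian category with all small colimits,
satisfying AB5 (filtered colimits are exact) and admitting a generator
(= separator). -/
def IsGrothendieckCategory (A : Type u) [Category.{v} A] [Abelian A]
    [HasColimits A] : Prop :=
  (∀ (J : Type v) [SmallCategory J] [IsFiltered J],
      Nonempty (PreservesFiniteLimits (colim : (J ⥤ A) ⥤ A))) ∧
  ∃ g : A, IsSeparator g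

/-- Let `G : C ⥤ D` and `R : D ⥤ C` be an adjoint pair of additive functors between
additive categories with `R` fully faithful, `G ⊣ R`, `C` Grothendieck abelian and
`G` exact. Then `D` is Grothendieck abelian. -/
theorem grothendieck_of_reflective
    {C : Type u₁} {D : Type u₂} [Category.{v} C] [Category.{v} D]
    [Preadditive D] [Abelian C] [HasColimits C]
    (hC : IsGrothendieckCategory C)
    (G : C ⥤ D) (R : D ⥤ C) [G.Additive] [R.Additive]
    (adj : G ⊣ R) [R.Full] [R.Faithful]
    (_ : PreservesFiniteLimits G) (_ : PreservesFiniteColimits G) :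
    ∃ (_ : Abelian D) (_ : HasColimits D), IsGrothendieckCategory D := by
  -- `R` is reflective
  haveI : Reflective R := ⟨G, adj⟩
  -- counit iso
  let i : R ⋙ G ≅ 𝟭 D := asIso adj.counit
  -- finite products in `D`
  haveI : HasFiniteProducts D :=
    ⟨fun n => hasLimitsOfShape_of_reflective R⟩
  -- `D` is abelian
  letI abD : Abelian D := abelianOfAdjunction R G i adj
  -- `D` has colimits
  letI colD : HasColimits D := hasColimits_of_reflective R
  refine ⟨abD, colD, ?_, ?_⟩
  · -- AB5
    intro J _ _
    haveI : PreservesColimitsOfSize.{v, v} G := adj.leftAdjoint_preservesColimits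
    haveI : PreservesLimitsOfSize.{0, 0} R := adj.rightAdjoint_preservesLimits
    obtain ⟨hAB5⟩ := hC.1 J
    let wR : (J ⥤ D) ⥤ (J ⥤ C) := (Functor.whiskeringRight J D C).obj R
    let wG : (J ⥤ C) ⥤ (J ⥤ D) := (Functor.whiskeringRight J C D).obj G
    haveI : PreservesFiniteLimits wR := ⟨fun K _ _ => inferInstance⟩
    haveI : PreservesFiniteLimits (colim : (J ⥤ C) ⥤ C) := hAB5
    let e1 : (colim : (J ⥤ C) ⥤ C) ⋙ G ≅ wG ⋙ colim := preservesColimitNatIso G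
    let e2 : wR ⋙ wG ≅ (Functor.whiskeringRight J D D).obj (R ⋙ G) := Functor.whiskeringRightObjCompIso R G
    let e3 : (Functor.whiskeringRight J D D).obj (R ⋙ G) ≅ (Functor.whiskeringRight J D D).obj (𝟭 D) :=
      (Functor.whiskeringRight J D D).mapIso i
    let e4 : (Functor.whiskeringRight J D D).obj (𝟭 D) ≅ 𝟭 (J ⥤ D) := Functor.whiskeringRightObjIdIso
    let e : wR ⋙ (colim : (J ⥤ C) ⥤ C) ⋙ G ≅ (colim : (J ⥤ D) ⥤ D) :=
      Functor.isoWhiskerLeft wR e1 ≪≫ (Functor.associator _ _ _).symm ≪≫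
        Functor.isoWhiskerRight (e2 ≪≫ e3 ≪≫ e4) colim ≪≫ colim.leftUnitor
    haveI : PreservesFiniteLimits ((colim : (J ⥤ C) ⥤ C) ⋙ G) :=
      comp_preservesFiniteLimits _ _
    haveI : PreservesFiniteLimits (wR ⋙ (colim : (J ⥤ C) ⥤ C) ⋙ G) :=
      comp_preservesFiniteLimits _ _
    exact ⟨preservesFiniteLimits_of_natIso e⟩
  · -- separator
    obtain ⟨g, hg⟩ := hC.2
    refine ⟨G.obj g, (isSeparator_def _).2 fun X Y f f' h => ?_⟩
    apply R.map_injective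
    refine (isSeparator_def _).1 hg _ _ fun u => ?_
    have := h ((adj.homEquiv g X).symm u)
    have h1 := adj.homEquiv_naturality_right ((adj.homEquiv g X).symm u) f
    have h2 := adj.homEquiv_naturality_right ((adj.homEquiv g X).symm u) f'
    rw [this] at h1
    rw [h1] at h2
    simpa using h2
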